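/- arXiv:1907.04010 — 5 statements merged into one kernel-verified Lean document; each statement's English description precedes it below -/
import Mathlib

section
/- Let A be a (not necessarily commutative) ring, b an element of the center of A, and N a left A-module. Let F : ℤ → AddSubgroup N be a monotone (increasing) family of additive subgroups of N that is exhaustive (every element of N lies in F i for some i ∈ ℤ) and bounded below (there exists i₀ ∈ ℤ with F i = ⊥ for all i < i₀), and suppose there exist an index j ∈ ℤ and a finite subset S of F j such that S generates N as an A-module. If there exists an integer k ≥ 1 such that for every i ∈ ℤ and every x ∈ F i one has b^k • x ∈ F (i-1), then there exists an integer m ≥ 1 such that b^m • x = 0 for every x ∈ N. -/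
/-- Key step in Lemma 3.9 of Budur–van der Veer–Wu–Zhou, "Zeroes of Bernstein-Sato ideals":
if a central element `b` of a (possibly noncommutative) ring `A` satisfies that some power
`b^k` shifts a bounded-below, exhaustive, monotone filtration by additive subgroups of a
finitely generated `A`-module `N` (generated by finitely many elements in some filtration
step), then some power `b^m` annihilates `N`. -/
theorem stmt_0 {A : Type*} [Ring A] {N : Type*} [AddCommGroup N] [Module A N]
    (b : A) (hb : b ∈ Set.center A) (F : ℤ → AddSubgroup N)
    (hmono : Monotone F)
    (hexh : ∀ x : N, ∃ i : ℤ, x ∈ F i)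
    (hbdd : ∃ i₀ : ℤ, ∀ i < i₀, F i = ⊥)
    (hgen : ∃ (j : ℤ) (S : Finset N), (↑S : Set N) ⊆ (F j : Set N) ∧
      Submodule.span A (↑S : Set N) = ⊤)
    (hk : ∃ k : ℕ, 1 ≤ k ∧ ∀ i : ℤ, ∀ x ∈ F i, b ^ k • x ∈ F (i - 1)) :
    ∃ m : ℕ, 1 ≤ m ∧ ∀ x : N, b ^ m • x = 0 := by
  obtain ⟨i₀, hi₀⟩ := hbdd
  obtain ⟨j, S, hSj, hspan⟩ := hgen
  obtain ⟨k, hk1, hkshift⟩ := hk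
  have hcomm : ∀ a : A, Commute b a := fun a =>
    ((Set.mem_center_iff.mp hb).comm a)
  -- iterated shift
  have hiter : ∀ (n : ℕ) (i : ℤ), ∀ x ∈ F i, b ^ (k * n) • x ∈ F (i - n) := by
    intro n
    induction n with
    | zero => intro i x hx; simpa using hx
    | succ n ih =>
      intro i x hx
      have h1 := hkshift i x hx
      have h2 := ih (i - 1) _ h1
      have hpow : b ^ (k * (n + 1)) = b ^ (k * n) * b ^ k := by
        rw [← pow_add]; ring_nf
      rw [hpow, mul_smul]
      have : (i - 1 - (n : ℤ)) = i - (n + 1 : ℕ) := by push_cast; ring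
      rwa [this] at h2
  set n : ℕ := max (j - i₀ + 1).toNat 1 with hn
  refine ⟨k * n, Nat.one_le_iff_ne_zero.mpr (by positivity), ?_⟩
  set m := k * n
  -- generators are killed
  have hkill : ∀ s ∈ S, b ^ m • s = 0 := by
    intro s hs
    have hmem := hiter n j s (hSj hs)
    have hlt : j - (n : ℤ) < i₀ := by
      have h1 : (j - i₀ + 1 : ℤ) ≤ ((j - i₀ + 1).toNat : ℤ) := Int.self_le_toNat _
      have h2 : ((j - i₀ + 1).toNat : ℤ) ≤ (n : ℤ) := by
        exact_mod_cast Nat.le_max_left _ 1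
      omega
    rw [hi₀ _ hlt] at hmem
    simpa using hmem
  -- the annihilator set is a submodule
  let p : Submodule A N :=
    { carrier := {x | b ^ m • x = 0}
      zero_mem' := by simp
      add_mem' := fun hx hy => by simp_all [smul_add]
      smul_mem' := fun a x hx => by
        have : b ^ m * a = a * b ^ m := ((hcomm a).pow_left m).eq
        simp only [Set.mem_setOf_eq] at hx ⊢
        rw [← mul_smul, this, mul_smul, hx, smul_zero] }
  have : Submodule.span A (↑S : Set N) ≤ p := Submodule.span_le.mpr fun s hs => hkill s hs
  intro x
  exact this (hspan ▸ Submodule.mem_top : x ∈ Submodule.span A (↑S : Set N))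
end

section
/- Let R be a commutative ring, N an R-module, and F : ℤ → Submodule R N a monotone (increasing) family of submodules that is exhaustive (every element of N lies in F i for some i ∈ ℤ) and bounded below (there exists i₀ ∈ ℤ with F i = ⊥ for all i < i₀). Let 𝔭 be a prime ideal of R. Then the localization of N at 𝔭 is nonzero if and only if there exists i ∈ ℤ such that the localization at 𝔭 of the quotient module (F i) / (F (i-1)) is nonzero. -/
/-- A localized module is nontrivial iff some element has no annihilator in `S`. -/
lemma loc_nontrivial_iff {R : Type*} [CommRing R] {M : Type*} [AddCommGroup M] [Module R M]
    (S : Submonoid R) :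
    Nontrivial (LocalizedModule S M) ↔ ∃ m : M, ∀ s : S, (s : R) • m ≠ 0 := by
  constructor
  · intro h
    by_contra hc
    push_neg at hc
    rcases exists_pair_ne (LocalizedModule S M) with ⟨a, b, hab⟩
    apply hab
    have key : ∀ c : LocalizedModule S M, c = 0 := by
      intro c
      induction c using LocalizedModule.induction_on with
      | h m t =>
        obtain ⟨s, hs⟩ := hc m
        rw [show (0 : LocalizedModule S M) = LocalizedModule.mk 0 1 from
          (LocalizedModule.zero_mk 1).symm, LocalizedModule.mk_eq]
        exact ⟨s, by simp [Submonoid.smul_def, hs]⟩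
    rw [key a, key b]
  · rintro ⟨m, hm⟩
    refine ⟨LocalizedModule.mk m 1, 0, fun heq => ?_⟩
    rw [show (0 : LocalizedModule S M) = LocalizedModule.mk 0 1 from
      (LocalizedModule.zero_mk 1).symm, LocalizedModule.mk_eq] at heq
    obtain ⟨u, hu⟩ := heq
    simp only [one_smul, smul_zero] at hu
    exact hm u hu

/-- supp_R(gr N) = supp_R(N), proved inside Lemma 3.9 of Budur–van der Veer–Wu–Zhou:
for a monotone, exhaustive, bounded-below filtration `F` of an `R`-module `N` by submodules,
the localization of `N` at a prime `𝔭` is nonzero iff the localization of some graded piece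
`F i / F (i-1)` at `𝔭` is nonzero. -/
theorem stmt_1 {R : Type*} [CommRing R] {N : Type*} [AddCommGroup N] [Module R N]
    (F : ℤ → Submodule R N) (hmono : Monotone F)
    (hexh : ∀ x : N, ∃ i : ℤ, x ∈ F i)
    (hbdd : ∃ i₀ : ℤ, ∀ i < i₀, F i = ⊥)
    (𝔭 : Ideal R) [𝔭.IsPrime] :
    Nontrivial (LocalizedModule 𝔭.primeCompl N) ↔
      ∃ i : ℤ, Nontrivial (LocalizedModule 𝔭.primeCompl
        (↥(F i) ⧸ (Submodule.comap (F i).subtype (F (i - 1))))) := by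
  simp only [loc_nontrivial_iff]
  constructor
  · rintro ⟨x, hx⟩
    by_contra h
    push_neg at h
    obtain ⟨i₀, hi₀⟩ := hbdd
    have key : ∀ i : ℤ, i₀ - 1 ≤ i → ∀ y ∈ F i, ∃ s : 𝔭.primeCompl, (s : R) • y = 0 := by
      intro i hi
      refine Int.le_induction (motive := fun j _ => ∀ y ∈ F j, ∃ s : 𝔭.primeCompl, (s : R) • y = 0)
        ?_ ?_ i hi
      · intro y hy
        rw [hi₀ _ (by omega)] at hy
        rw [Submodule.mem_bot] at hy
        exact ⟨1, by simp [hy]⟩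
      · intro n hn ih y hy
        obtain ⟨s, hs⟩ := h (n + 1) (Submodule.Quotient.mk ⟨y, hy⟩)
        rw [← Submodule.Quotient.mk_smul, Submodule.Quotient.mk_eq_zero] at hs
        have hmem : (s : R) • y ∈ F (n + 1 - 1) := hs
        rw [show n + 1 - 1 = n from by ring] at hmem
        obtain ⟨t, ht⟩ := ih ((s : R) • y) hmem
        refine ⟨t * s, ?_⟩
        rw [Submonoid.coe_mul, mul_smul]
        exact ht
    obtain ⟨i, hxi⟩ := hexh x
    obtain ⟨s, hs⟩ := key (max i (i₀ - 1)) (le_max_right _ _)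
      x (hmono (le_max_left _ _) hxi)
    exact hx s hs
  · rintro ⟨i, q, hq⟩
    obtain ⟨z, rfl⟩ := Submodule.Quotient.mk_surjective _ q
    refine ⟨(z : N), fun s hcontra => ?_⟩
    apply hq s
    rw [← Submodule.Quotient.mk_smul]
    have hz : (s : R) • z = 0 := Subtype.ext (by simpa using hcontra)
    rw [hz, Submodule.Quotient.mk_zero]
end

section
/- Let R be a commutative ring, N an R-module, b ∈ R, and F : ℤ → Submodule R N a monotone (increasing) family of submodules that is exhaustive (every element of N lies in F i for some i ∈ ℤ). If multiplication by b is injective on every graded piece, i.e. for every j ∈ ℤ and every x ∈ F j with b • x ∈ F (j-1) one has x ∈ F (j-1), then for every i ∈ ℤ and every x ∈ N, b • x ∈ F i implies x ∈ F i (that is, multiplication by b is injective on the quotient module N / F i). -/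
/-- If multiplication by `b ∈ R` is injective on every graded piece of a monotone, exhaustive
filtration `F` of an `R`-module `N`, then multiplication by `b` is injective on each quotient
`N / F i`: `b • x ∈ F i` implies `x ∈ F i` (claim inside the proof of Proposition 3.14 of
Budur–van der Veer–Wu–Zhou). -/
theorem stmt_3 {R : Type*} [CommRing R] {N : Type*} [AddCommGroup N] [Module R N]
    (b : R) (F : ℤ → Submodule R N) (hmono : Monotone F)
    (hexh : ∀ x : N, ∃ i : ℤ, x ∈ F i)
    (hinj : ∀ j : ℤ, ∀ x ∈ F j, b • x ∈ F (j - 1) → x ∈ F (j - 1)) :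
    ∀ i : ℤ, ∀ x : N, b • x ∈ F i → x ∈ F i := by
  intro i x hbx
  obtain ⟨j, hj⟩ := hexh x
  suffices h : ∀ n : ℕ, ∀ j : ℤ, j ≤ i + n → x ∈ F j → x ∈ F i by
    rcases le_or_gt j i with hji | hij
    · exact hmono hji hj
    · exact h (j - i).toNat j (by omega) hj
  intro n
  induction n with
  | zero => intro j hji hx; exact hmono (by omega) hx
  | succ n ih =>
    intro j hji hx
    rcases le_or_gt j i with hji' | hij
    · exact hmono hji' hx
    · have : x ∈ F (j - 1) := hinj j x hx (hmono (by omega) hbx)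
      exact ih (j - 1) (by omega) this
end

section
/- Let R be a commutative ring, N an R-module, b ∈ R, and F : ℤ → Submodule R N a monotone (increasing) family of submodules that is exhaustive (every element of N lies in F i for some i ∈ ℤ). Assume multiplication by b is injective on every graded piece, i.e. for every j ∈ ℤ and every x ∈ F j with b • x ∈ F (j-1) one has x ∈ F (j-1). Then for every i ∈ ℤ, (F i) ⊓ (b • N) = b • (F i), where b • P denotes the image of a submodule P under the R-linear map x ↦ b • x. In other words, the filtration on N/bN induced from F coincides with the filtration by the images F i / b (F i). -/
/-- If multiplication by `b ∈ R` is injective on every graded piece of a monotone, exhaustive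
filtration `F` of an `R`-module `N`, then `F i ⊓ b•N = b•(F i)` for every `i`: the filtration
induced on `N/bN` coincides with the filtration by the images `F i / b(F i)` (established by
the snake lemma in the proof of Proposition 3.14 of Budur–van der Veer–Wu–Zhou). -/
theorem stmt_4 {R : Type*} [CommRing R] {N : Type*} [AddCommGroup N] [Module R N]
    (b : R) (F : ℤ → Submodule R N) (hmono : Monotone F)
    (hexh : ∀ x : N, ∃ i : ℤ, x ∈ F i)
    (hinj : ∀ j : ℤ, ∀ x ∈ F j, b • x ∈ F (j - 1) → x ∈ F (j - 1)) :
    ∀ i : ℤ, F i ⊓ Submodule.map (LinearMap.lsmul R N b) ⊤ =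
      Submodule.map (LinearMap.lsmul R N b) (F i) := by
  intro i
  have key : ∀ n : ℕ, ∀ y : N, y ∈ F (i + n) → b • y ∈ F i → y ∈ F i := by
    intro n
    induction n with
    | zero => intro y hy _; simpa using hy
    | succ n ih =>
      intro y hy hby
      apply ih
      have : y ∈ F (i + (n + 1 : ℕ) - 1) := by
        apply hinj _ _ hy
        exact hmono (by push_cast; omega) hby
      have h2 : (i + (n + 1 : ℕ) - 1 : ℤ) = i + n := by push_cast; omega
      rwa [h2] at this
      exact hby
  apply le_antisymm
  · rintro x ⟨hx, y, -, rfl⟩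
    obtain ⟨j, hj⟩ := hexh y
    rcases le_or_gt j i with h | h
    · exact ⟨y, hmono h hj, rfl⟩
    · obtain ⟨n, hn⟩ : ∃ n : ℕ, j = i + n := ⟨(j - i).toNat, by omega⟩
      exact ⟨y, key n y (hn ▸ hj) hx, rfl⟩
  · rintro x ⟨y, hy, rfl⟩
    exact ⟨(F i).smul_mem b hy, ⟨y, trivial, rfl⟩⟩
end

section
/- Let R be a commutative ring, N an R-module, b ∈ R, and F : ℤ → Submodule R N a monotone (increasing) family of submodules that is exhaustive (every element of N lies in F i for some i ∈ ℤ). Assume multiplication by b is injective on every graded piece, i.e. for every j ∈ ℤ and every x ∈ F j with b • x ∈ F (j-1) one has x ∈ F (j-1). Then for every i ∈ ℤ, (F i) ⊓ (F (i-1) ⊔ b • N) = F (i-1) ⊔ b • (F i), where b • P denotes the image of a submodule P under the R-linear map x ↦ b • x. (Equivalently, the i-th graded piece of the quotient module N/(b•N), with its induced filtration, is isomorphic to the quotient of the graded piece F i / F (i-1) by the image of multiplication by b on it: gr(N ⊗ R/(b)) ≅ (gr N) ⊗ R/(b).) -/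
/-- Identity (3.4) of Budur–van der Veer–Wu–Zhou, `gr(N ⊗_R R/(b)) ≅ (gr N) ⊗_R R/(b)`,
expressed as an equality of submodules of `N`: if multiplication by `b ∈ R` is injective on
every graded piece of a monotone, exhaustive filtration `F` of an `R`-module `N`, then
`F i ⊓ (F (i-1) ⊔ b•N) = F (i-1) ⊔ b•(F i)` for every `i`. -/
theorem stmt_5 {R : Type*} [CommRing R] {N : Type*} [AddCommGroup N] [Module R N]
    (b : R) (F : ℤ → Submodule R N) (hmono : Monotone F)
    (hexh : ∀ x : N, ∃ i : ℤ, x ∈ F i)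
    (hinj : ∀ j : ℤ, ∀ x ∈ F j, b • x ∈ F (j - 1) → x ∈ F (j - 1)) :
    ∀ i : ℤ, F i ⊓ (F (i - 1) ⊔ Submodule.map (LinearMap.lsmul R N b) ⊤) =
      F (i - 1) ⊔ Submodule.map (LinearMap.lsmul R N b) (F i) := by
  intro i
  have key : ∀ n : ℕ, ∀ j : ℤ, ∀ z : N, z ∈ F j → j ≤ i + n → b • z ∈ F i → z ∈ F i := by
    intro n
    induction n with
    | zero =>
      intro j z hz hj _
      exact hmono (by simpa using hj) hz
    | succ n ih =>
      intro j z hz hj hbz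
      rcases le_or_gt j (i + n) with h | h
      · exact ih j z hz h hbz
      · have hij : i ≤ j - 1 := by omega
        have : z ∈ F (j - 1) := hinj j z hz (hmono hij hbz)
        exact ih (j - 1) z this (by omega) hbz
  apply le_antisymm
  · rintro x ⟨hx, hx2⟩
    rcases Submodule.mem_sup.1 hx2 with ⟨y, hy, w, hw, rfl⟩
    rcases Submodule.mem_map.1 hw with ⟨z, -, rfl⟩
    have hbz : b • z ∈ F i := by
      have : (LinearMap.lsmul R N b) z = (y + (LinearMap.lsmul R N b) z) - y := by abel
      simpa [LinearMap.lsmul_apply] using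
        Submodule.sub_mem _ hx (hmono (by omega : i - 1 ≤ i) hy)
    rcases hexh z with ⟨j, hj⟩
    have hz : z ∈ F (max j i) := hmono (le_max_left _ _) hj
    have hzi : z ∈ F i :=
      key (max j i - i).toNat (max j i) z hz (by omega) hbz
    exact Submodule.mem_sup.2 ⟨y, hy, b • z, Submodule.mem_map.2 ⟨z, hzi, rfl⟩, rfl⟩
  · refine sup_le ?_ ?_
    · refine le_inf (hmono (by omega)) (le_sup_left)
    · refine le_inf ?_ (le_sup_of_le_right (Submodule.map_mono le_top))
      rintro x ⟨z, hz, rfl⟩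
      exact Submodule.smul_mem _ b hz
end
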